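/- Let z ∈ S_ℤ be an involution and a ∈ Incr⁺_n(z) (with n ≥ 2). Set q := ℓ(a¹) and define w := concat(a) if q ≤ 1 and w := ock_{q−2}⋯ock_1 ock_0(concat(a)) if q ≥ 2. If q = 0, or if a² is nonempty and q ∈ Des(w), then f_1̄(a) = 0; otherwise concat(f_1̄(a)) = w. -/

import Mathlib

namespace QPaper

abbrev Std := ℕ × Bool
abbrev PLetter := ℤ × Bool
abbrev NLet := ℕ × Bool
abbrev Tab := ℕ × ℕ → Option NLet
abbrev ZTab := ℕ × ℕ → Option PLetter

/-- iterate a partial operator -/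
def iterO {B : Type} (g : B → Option B) : ℕ → B → Option B
  | 0, b => some b
  | k + 1, b => (iterO g k b).bind g

/-- Raw data of a crystal with operators `e_i, f_i` (`1 ≤ i ≤ n-1`),
`e_1bar, f_1bar`, `e_0, f_0`, and a weight map with coordinates indexed `1,…,n`. -/
structure Crystal (n : ℕ) (B : Type) where
  wt : B → ℕ → ℤ
  e : ℕ → B → Option B
  f : ℕ → B → Option B
  ebar : B → Option B
  fbar : B → Option B
  e0 : B → Option B
  f0 : B → Option B

namespace Crystal

variable {n : ℕ} {B B' B'' : Type}

noncomputable def eps (C : Crystal n B) (i : ℕ) (b : B) : ℕ := sSup {k | iterO (C.e i) k b ≠ none}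
noncomputable def phi (C : Crystal n B) (i : ℕ) (b : B) : ℕ := sSup {k | iterO (C.f i) k b ≠ none}
noncomputable def epsBar (C : Crystal n B) (b : B) : ℕ := sSup {k | iterO C.ebar k b ≠ none}
noncomputable def phiBar (C : Crystal n B) (b : B) : ℕ := sSup {k | iterO C.fbar k b ≠ none}
noncomputable def eps0 (C : Crystal n B) (b : B) : ℕ := sSup {k | iterO C.e0 k b ≠ none}
noncomputable def phi0 (C : Crystal n B) (b : B) : ℕ := sSup {k | iterO C.f0 k b ≠ none}

/-- The `gl_n`-crystal axioms (S1)-(S2). -/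
structure IsGL (C : Crystal n B) : Prop where
  wt_zero : ∀ b i, i = 0 ∨ n < i → C.wt b i = 0
  e_range : ∀ i b, i = 0 ∨ n ≤ i → C.e i b = none
  f_range : ∀ i b, i = 0 ∨ n ≤ i → C.f i b = none
  e_bdd : ∀ i b, ∃ N, iterO (C.e i) N b = none
  f_bdd : ∀ i b, ∃ N, iterO (C.f i) N b = none
  ef_iff : ∀ i, 1 ≤ i → i ≤ n - 1 → ∀ b c, C.e i b = some c ↔ C.f i c = some b
  e_wt : ∀ i, 1 ≤ i → i ≤ n - 1 → ∀ b c, C.e i b = some c →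
    ∀ j, C.wt c j = C.wt b j + (if j = i then 1 else 0) - (if j = i + 1 then 1 else 0)
  string_eq : ∀ i, 1 ≤ i → i ≤ n - 1 → ∀ b,
    (C.phi i b : ℤ) - (C.eps i b : ℤ) = C.wt b i - C.wt b (i + 1)

/-- The `q_n`-crystal axioms (P1)-(P3) on top of the `gl_n` ones. -/
structure IsQ (C : Crystal n B) extends IsGL C : Prop where
  wt_nonneg : ∀ b i, 0 ≤ C.wt b i
  ebar_bdd : ∀ b, ∃ N, iterO C.ebar N b = none
  fbar_bdd : ∀ b, ∃ N, iterO C.fbar N b = none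
  bar_iff : ∀ b c, C.ebar b = some c ↔ C.fbar c = some b
  ebar_wt : 2 ≤ n → ∀ b c, C.ebar b = some c →
    (∀ j, C.wt c j = C.wt b j + (if j = 1 then 1 else 0) - (if j = 2 then 1 else 0)) ∧
    (∀ i, 3 ≤ i → i ≤ n - 1 → C.eps i b = C.eps i c ∧ C.phi i b = C.phi i c)
  bar_comm : 2 ≤ n → ∀ i, 3 ≤ i → i ≤ n - 1 → ∀ b,
    (C.e i b).bind C.ebar = (C.ebar b).bind (C.e i) ∧
    (C.e i b).bind C.fbar = (C.fbar b).bind (C.e i) ∧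
    (C.f i b).bind C.ebar = (C.ebar b).bind (C.f i) ∧
    (C.f i b).bind C.fbar = (C.fbar b).bind (C.f i)
  bar_string : 2 ≤ n → ∀ b,
    C.epsBar b + C.phiBar b = (if C.wt b 1 = 0 ∧ C.wt b 2 = 0 then 0 else 1)
  bar_none : n < 2 → ∀ b, C.ebar b = none ∧ C.fbar b = none

/-- The `q⁺_n`-crystal axioms (Q1)-(Q3) on top of the `q_n` ones. -/
structure IsQPlus (C : Crystal n B) extends IsQ C : Prop where
  e0_bdd : ∀ b, ∃ N, iterO C.e0 N b = none
  f0_bdd : ∀ b, ∃ N, iterO C.f0 N b = none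
  zero_iff : ∀ b c, C.e0 b = some c ↔ C.f0 c = some b
  e0_wt : ∀ b c, C.e0 b = some c →
    (∀ j, C.wt c j = C.wt b j) ∧
    (∀ i, 1 ≤ i → i ≤ n - 1 → C.eps i b = C.eps i c ∧ C.phi i b = C.phi i c) ∧
    (C.epsBar b = C.epsBar c ∧ C.phiBar b = C.phiBar c)
  zero_comm : ∀ i, 2 ≤ i → i ≤ n - 1 → ∀ b,
    (C.e i b).bind C.e0 = (C.e0 b).bind (C.e i) ∧
    (C.e i b).bind C.f0 = (C.f0 b).bind (C.e i) ∧
    (C.f i b).bind C.e0 = (C.e0 b).bind (C.f i) ∧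
    (C.f i b).bind C.f0 = (C.f0 b).bind (C.f i)
  zero_string : ∀ b, C.eps0 b + C.phi0 b = (if C.wt b 1 = 0 then 0 else 1)

/-- The standard `q⁺_n`-crystal `𝔹⁺_n` on letters `(k, primed?)`, `1 ≤ k ≤ n`. -/
def stdC (n : ℕ) : Crystal n Std where
  wt := fun l j => if j = l.1 ∧ 1 ≤ l.1 ∧ l.1 ≤ n then 1 else 0
  e := fun i l => if 1 ≤ i ∧ i ≤ n - 1 ∧ l.1 = i + 1 then some (i, l.2) else none
  f := fun i l => if 1 ≤ i ∧ i ≤ n - 1 ∧ l.1 = i then some (i + 1, l.2) else none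
  ebar := fun l => if 2 ≤ n ∧ l.1 = 2 then some (1, l.2) else none
  fbar := fun l => if 2 ≤ n ∧ l.1 = 1 then some (2, l.2) else none
  e0 := fun l => if 1 ≤ n ∧ l = (1, true) then some (1, false) else none
  f0 := fun l => if 1 ≤ n ∧ l = (1, false) then some (1, true) else none

/-- The one-element crystal of weight `0`. -/
def unitC (n : ℕ) : Crystal n PUnit where
  wt := fun _ _ => 0
  e := fun _ _ => none
  f := fun _ _ => none
  ebar := fun _ => none
  fbar := fun _ => none
  e0 := fun _ => none
  f0 := fun _ => none

/-- The `q⁺_n`-tensor product of two crystals (anti-Kashiwara convention). -/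
noncomputable def tensor (C : Crystal n B) (D : Crystal n B') : Crystal n (B × B') where
  wt := fun x j => C.wt x.1 j + D.wt x.2 j
  e := fun i x =>
    if C.eps i x.1 ≤ D.phi i x.2 then (D.e i x.2).map (fun c => (x.1, c))
    else (C.e i x.1).map (fun b => (b, x.2))
  f := fun i x =>
    if C.eps i x.1 < D.phi i x.2 then (D.f i x.2).map (fun c => (x.1, c))
    else (C.f i x.1).map (fun b => (b, x.2))
  e0 := fun x =>
    if C.wt x.1 1 ≠ 0 then (C.e0 x.1).map (fun b => (b, x.2))
    else (D.e0 x.2).map (fun c => (x.1, c))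
  f0 := fun x =>
    if C.wt x.1 1 ≠ 0 then (C.f0 x.1).map (fun b => (b, x.2))
    else (D.f0 x.2).map (fun c => (x.1, c))
  ebar := fun x =>
    if C.wt x.1 1 = 0 ∧ C.wt x.1 2 = 0 then (D.ebar x.2).map (fun c => (x.1, c))
    else if h : C.wt x.1 1 = 0 ∧ ((C.ebar x.1).bind C.f0).isSome ∧ (D.e0 x.2).isSome then
      some (((C.ebar x.1).bind C.f0).get h.2.1, (D.e0 x.2).get h.2.2)
    else if h : C.wt x.1 1 = 0 ∧ ((C.ebar x.1).bind C.e0).isSome ∧ (D.f0 x.2).isSome then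
      some (((C.ebar x.1).bind C.e0).get h.2.1, (D.f0 x.2).get h.2.2)
    else (C.ebar x.1).map (fun b => (b, x.2))
  fbar := fun x =>
    if C.wt x.1 1 = 0 ∧ C.wt x.1 2 = 0 then (D.fbar x.2).map (fun c => (x.1, c))
    else if h : C.wt x.1 1 = 1 ∧ ((C.f0 x.1).bind C.fbar).isSome ∧ (D.e0 x.2).isSome then
      some (((C.f0 x.1).bind C.fbar).get h.2.1, (D.e0 x.2).get h.2.2)
    else if h : C.wt x.1 1 = 1 ∧ ((C.e0 x.1).bind C.fbar).isSome ∧ (D.f0 x.2).isSome then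
      some (((C.e0 x.1).bind C.fbar).get h.2.1, (D.f0 x.2).get h.2.2)
    else (C.fbar x.1).map (fun b => (b, x.2))

/-- Underlying type of the `m`-th tensor power of the standard crystal. -/
def PowT : ℕ → Type
  | 0 => PUnit
  | m + 1 => PowT m × Std

/-- The `m`-th `q⁺_n`-tensor power `(𝔹⁺_n)^{⊗m}`. -/
noncomputable def powC (n : ℕ) : (m : ℕ) → Crystal n (PowT m)
  | 0 => unitC n
  | m + 1 => tensor (powC n m) (stdC n)

/-- One edge of the crystal graph. -/
def step (C : Crystal n B) (b c : B) : Prop :=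
  (∃ i, C.f i b = some c) ∨ C.fbar b = some c ∨ C.f0 b = some c

/-- Weak connectivity in the crystal graph. -/
def joined (C : Crystal n B) : B → B → Prop :=
  Relation.ReflTransGen (fun b c => step C b c ∨ step C c b)

/-- Weakly connected component (full subcrystal) through `b`. -/
def component (C : Crystal n B) (b : B) : Set B := {c | joined C b c}

def mapsAgree (C : Crystal n B) (D : Crystal n B') (φ : B → B') (x : B) : Prop :=
  (∀ j, D.wt (φ x) j = C.wt x j) ∧
  (∀ i, (C.e i x).map φ = D.e i (φ x)) ∧
  (∀ i, (C.f i x).map φ = D.f i (φ x)) ∧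
  ((C.ebar x).map φ = D.ebar (φ x)) ∧
  ((C.fbar x).map φ = D.fbar (φ x)) ∧
  ((C.e0 x).map φ = D.e0 (φ x)) ∧
  ((C.f0 x).map φ = D.f0 (φ x))

/-- `S ⊆ B` and `T ⊆ B'` are isomorphic as (sub)crystals. -/
def IsIsoOn (C : Crystal n B) (D : Crystal n B') (S : Set B) (T : Set B') : Prop :=
  ∃ φ : B → B', Set.BijOn φ S T ∧ ∀ x ∈ S, mapsAgree C D φ x

/-- `φ` is an isomorphism of crystals. -/
def IsIso (C : Crystal n B) (D : Crystal n B') (φ : B → B') : Prop :=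
  Function.Bijective φ ∧ ∀ x, mapsAgree C D φ x

/-- A quasi-isomorphism of crystals: restricts to an isomorphism on every full subcrystal. -/
def IsQuasiIso (C : Crystal n B) (D : Crystal n B') (ψ : B → B') : Prop :=
  ∀ b : B, ψ '' component C b = component D (ψ b) ∧
    Set.InjOn ψ (component C b) ∧
    ∀ x ∈ component C b, mapsAgree C D ψ x

/-- Normality for `q⁺_n`-crystals. -/
def IsNormal (C : Crystal n B) : Prop :=
  IsQPlus C ∧ ∀ b : B, ∃ (m : ℕ) (x : PowT m),
    IsIsoOn C (powC n m) (component C b) (component (powC n m) x)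

/-- The string-reversing involution `σ_i` from equation (3.3). -/
noncomputable def sigma (C : Crystal n B) (i : ℕ) (b : B) : B :=
  if C.eps i b ≤ C.phi i b then (iterO (C.f i) (C.phi i b - C.eps i b) b).getD b
  else (iterO (C.e i) (C.eps i b - C.phi i b) b).getD b

/-- The involution `σ_0`. -/
noncomputable def sigma0 (C : Crystal n B) (b : B) : B :=
  (C.e0 b).getD ((C.f0 b).getD b)

/-- `σ_k ⋯ σ_2 σ_1` (applying `σ_1` first). -/
noncomputable def sigmaDown (C : Crystal n B) : ℕ → B → B
  | 0 => id
  | k + 1 => fun b => C.sigma (k + 1) (C.sigmaDown k b)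

/-- `σ_1 σ_2 ⋯ σ_k` (applying `σ_k` first). -/
noncomputable def sigmaUp (C : Crystal n B) : ℕ → B → B
  | 0 => id
  | k + 1 => fun b => C.sigmaUp k (C.sigma (k + 1) b)

noncomputable def sigmaW0Aux (C : Crystal n B) : ℕ → B → B
  | 0 => id
  | k + 1 => fun b => C.sigmaW0Aux k (C.sigmaDown (k + 1) b)

/-- `σ_{w_0} = (σ_1)(σ_2σ_1)⋯(σ_{n-1}⋯σ_2σ_1)`. -/
noncomputable def sigmaW0 (C : Crystal n B) : B → B := C.sigmaW0Aux (n - 1)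

noncomputable def sigmaW0InvAux (C : Crystal n B) : ℕ → B → B
  | 0 => id
  | k + 1 => fun b => C.sigmaUp (k + 1) (C.sigmaW0InvAux k b)

/-- The inverse `σ_{w_0}^{-1}`. -/
noncomputable def sigmaW0Inv (C : Crystal n B) : B → B := C.sigmaW0InvAux (n - 1)

/-- `σ_k ⋯ σ_1 σ_0` (applying `σ_0` first). -/
noncomputable def sigmaDown0 (C : Crystal n B) : ℕ → B → B
  | 0 => C.sigma0
  | k + 1 => fun b => C.sigma (k + 1) (C.sigmaDown0 k b)

noncomputable def sigmaW0PlusAux (C : Crystal n B) : ℕ → B → B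
  | 0 => id
  | k + 1 => fun b => C.sigmaW0PlusAux k (C.sigmaDown0 k b)

/-- `σ_{w_0^+} = (σ_0)(σ_1σ_0)(σ_2σ_1σ_0)⋯(σ_{n-1}⋯σ_1σ_0)`. -/
noncomputable def sigmaW0Plus (C : Crystal n B) : B → B := C.sigmaW0PlusAux n

/-- The operators `e_{ī}` for `1 ≤ i ≤ n-1`, with `e_{1̄} = ebar` and
`e_{ī} = σ_{i-1} σ_i e_{\overline{i-1}} σ_i σ_{i-1}`. -/
noncomputable def eBarIdx (C : Crystal n B) : ℕ → B → Option B
  | 0, _ => none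
  | 1, b => C.ebar b
  | k + 2, b =>
    (C.eBarIdx (k + 1) (C.sigma (k + 2) (C.sigma (k + 1) b))).map
      (fun c => C.sigma (k + 1) (C.sigma (k + 2) c))

/-- The operators `f_{ī}`. -/
noncomputable def fBarIdx (C : Crystal n B) : ℕ → B → Option B
  | 0, _ => none
  | 1, b => C.fbar b
  | k + 2, b =>
    (C.fBarIdx (k + 1) (C.sigma (k + 2) (C.sigma (k + 1) b))).map
      (fun c => C.sigma (k + 1) (C.sigma (k + 2) c))

/-- `e_{ī′} = σ_{w_0} f_{\overline{n-i}} σ_{w_0}^{-1}`. -/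
noncomputable def eBarPrime (C : Crystal n B) (i : ℕ) (b : B) : Option B :=
  (C.fBarIdx (n - i) (C.sigmaW0Inv b)).map C.sigmaW0

/-- `f_{ī′} = σ_{w_0} e_{\overline{n-i}} σ_{w_0}^{-1}`. -/
noncomputable def fBarPrime (C : Crystal n B) (i : ℕ) (b : B) : Option B :=
  (C.eBarIdx (n - i) (C.sigmaW0Inv b)).map C.sigmaW0

/-- `e_0^{[i]} = σ_{i-1} ⋯ σ_1 e_0 σ_1 ⋯ σ_{i-1}`. -/
noncomputable def e0Idx (C : Crystal n B) (i : ℕ) (b : B) : Option B :=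
  (C.e0 (C.sigmaUp (i - 1) b)).map (C.sigmaDown (i - 1))

/-- `f_0^{[i]} = σ_{i-1} ⋯ σ_1 f_0 σ_1 ⋯ σ_{i-1}`. -/
noncomputable def f0Idx (C : Crystal n B) (i : ℕ) (b : B) : Option B :=
  (C.f0 (C.sigmaUp (i - 1) b)).map (C.sigmaDown (i - 1))

def IsGLHighest (C : Crystal n B) (b : B) : Prop :=
  ∀ i, 1 ≤ i → i ≤ n - 1 → C.e i b = none

def IsGLLowest (C : Crystal n B) (b : B) : Prop :=
  ∀ i, 1 ≤ i → i ≤ n - 1 → C.f i b = none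

def IsQHighest (C : Crystal n B) (b : B) : Prop :=
  IsGLHighest C b ∧ ∀ i, 1 ≤ i → i ≤ n - 1 → C.eBarIdx i b = none

def IsQLowest (C : Crystal n B) (b : B) : Prop :=
  IsGLLowest C b ∧ ∀ i, 1 ≤ i → i ≤ n - 1 → C.fBarPrime i b = none

def IsQPlusHighest (C : Crystal n B) (b : B) : Prop :=
  IsQHighest C b ∧ ∀ i, 1 ≤ i → i ≤ n → C.e0Idx i b = none

def IsQPlusLowest (C : Crystal n B) (b : B) : Prop :=
  IsQLowest C b ∧ ∀ i, 1 ≤ i → i ≤ n → C.f0Idx i b = none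

/-! ### `gl_n`-specific notions (ignoring the barred and `0` operators) -/

def glStep (C : Crystal n B) (b c : B) : Prop := ∃ i, C.f i b = some c

def glJoined (C : Crystal n B) : B → B → Prop :=
  Relation.ReflTransGen (fun b c => glStep C b c ∨ glStep C c b)

def glComponent (C : Crystal n B) (b : B) : Set B := {c | glJoined C b c}

def glMapsAgree (C : Crystal n B) (D : Crystal n B') (φ : B → B') (x : B) : Prop :=
  (∀ j, D.wt (φ x) j = C.wt x j) ∧
  (∀ i, (C.e i x).map φ = D.e i (φ x)) ∧
  (∀ i, (C.f i x).map φ = D.f i (φ x))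

def IsGLIsoOn (C : Crystal n B) (D : Crystal n B') (S : Set B) (T : Set B') : Prop :=
  ∃ φ : B → B', Set.BijOn φ S T ∧ ∀ x ∈ S, glMapsAgree C D φ x

/-- The standard `gl_n`-crystal `𝔹_n` on the letters `1,…,n`. -/
def stdGLC (n : ℕ) : Crystal n ℕ where
  wt := fun l j => if j = l ∧ 1 ≤ l ∧ l ≤ n then 1 else 0
  e := fun i l => if 1 ≤ i ∧ i ≤ n - 1 ∧ l = i + 1 then some i else none
  f := fun i l => if 1 ≤ i ∧ i ≤ n - 1 ∧ l = i then some (i + 1) else none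
  ebar := fun _ => none
  fbar := fun _ => none
  e0 := fun _ => none
  f0 := fun _ => none

def GLPowT : ℕ → Type
  | 0 => PUnit
  | m + 1 => GLPowT m × ℕ

noncomputable def glPowC (n : ℕ) : (m : ℕ) → Crystal n (GLPowT m)
  | 0 => unitC n
  | m + 1 => tensor (glPowC n m) (stdGLC n)

/-- Normality for `gl_n`-crystals. -/
def IsGLNormal (C : Crystal n B) : Prop :=
  IsGL C ∧ ∀ b : B, ∃ (m : ℕ) (x : GLPowT m),
    IsGLIsoOn C (glPowC n m) (glComponent C b) (glComponent (glPowC n m) x)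

end Crystal

open Crystal

/-- Character of a finite crystal, as a polynomial in `x_1,…,x_n`. -/
noncomputable def char {n : ℕ} {B : Type} [Fintype B] (C : Crystal n B) :
    MvPolynomial (Fin n) ℤ :=
  ∑ b : B, ∏ i : Fin n, MvPolynomial.X i ^ (C.wt b ((i : ℕ) + 1)).toNat

-- Restriction of a partial operator to a subtype.
open Classical in
noncomputable def restrictP {α : Type} (P : α → Prop) (g : α → Option α) (x : Subtype P) :
    Option (Subtype P) :=
  (g x.1).bind (fun y => if h : P y then some ⟨y, h⟩ else none)

/-! ### The crystal of words `W⁺_n(m)` -/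

/-- `i`-unpaired indices (0-based) of a word, via the parenthesis matching where letters
with value `i` are `)` and letters with value `i+1` are `(`. -/
def wUnpaired (i : ℕ) (w : List (ℕ × Bool)) : List ℕ :=
  let r := (w.zipIdx.map Prod.swap).foldl (fun (st : List ℕ × List ℕ) p =>
    if p.2.1 = i + 1 then (p.1 :: st.1, st.2)
    else if p.2.1 = i then
      match st.1 with
      | _o :: os => (os, st.2)
      | [] => (st.1, p.1 :: st.2)
    else st) ([], [])
  r.2.reverse ++ r.1.reverse

def wordF (n i : ℕ) (w : List (ℕ × Bool)) : Option (List (ℕ × Bool)) :=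
  if 1 ≤ i ∧ i ≤ n - 1 then
    match ((wUnpaired i w).filter (fun j => (w.getD j default).1 == i)).getLast? with
    | none => none
    | some j => some (w.set j (i + 1, (w.getD j default).2))
  else none

def wordE (n i : ℕ) (w : List (ℕ × Bool)) : Option (List (ℕ × Bool)) :=
  if 1 ≤ i ∧ i ≤ n - 1 then
    match ((wUnpaired i w).filter (fun j => (w.getD j default).1 == i + 1)).head? with
    | none => none
    | some j => some (w.set j (i, (w.getD j default).2))
  else none

def wordFbar (n : ℕ) (w : List (ℕ × Bool)) : Option (List (ℕ × Bool)) :=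
  if 2 ≤ n then
    match w.findIdx? (fun l => l.1 == 1) with
    | none => none
    | some j =>
      if (w.take j).any (fun l => l.1 == 2) then none
      else
        match (w.drop (j + 1)).findIdx? (fun l => l.1 == 1) with
        | none => some (w.set j (2, (w.getD j default).2))
        | some k' =>
          let k := j + 1 + k'
          let a := w.getD j default
          let b := w.getD k default
          if a.2 = b.2 then some (w.set j (2, a.2))
          else if a.2 = false then some ((w.set j (2, true)).set k (1, false))
          else some ((w.set j (2, false)).set k (1, true))
  else none

def wordEbar (n : ℕ) (w : List (ℕ × Bool)) : Option (List (ℕ × Bool)) :=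
  if 2 ≤ n then
    match w.findIdx? (fun l => l.1 == 2) with
    | none => none
    | some j =>
      if (w.take j).any (fun l => l.1 == 1) then none
      else
        match (w.drop (j + 1)).findIdx? (fun l => l.1 == 1) with
        | none => some (w.set j (1, (w.getD j default).2))
        | some k' =>
          let k := j + 1 + k'
          let a := w.getD j default
          let b := w.getD k default
          if a.2 = b.2 then some (w.set j (1, a.2))
          else if a.2 = true then some ((w.set j (1, false)).set k (1, true))
          else some ((w.set j (1, true)).set k (1, false))
  else none

def wordF0 (w : List (ℕ × Bool)) : Option (List (ℕ × Bool)) :=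
  match w.findIdx? (fun l => l.1 == 1) with
  | some j => if (w.getD j default).2 = false then some (w.set j (1, true)) else none
  | none => none

def wordE0 (w : List (ℕ × Bool)) : Option (List (ℕ × Bool)) :=
  match w.findIdx? (fun l => l.1 == 1) with
  | some j => if (w.getD j default).2 = true then some (w.set j (1, false)) else none
  | none => none

/-- Membership in `W⁺_n(m)`. -/
def WordP (n m : ℕ) (w : List (ℕ × Bool)) : Prop :=
  w.length = m ∧ ∀ l ∈ w, 1 ≤ l.1 ∧ l.1 ≤ n

/-- The `q⁺_n`-crystal of words `W⁺_n(m)`. -/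
noncomputable def wordC (n m : ℕ) : Crystal n (Subtype (WordP n m)) where
  wt := fun w k =>
    if 1 ≤ k ∧ k ≤ n then ((w.1.filter (fun l => l.1 == k)).length : ℤ) else 0
  e := fun i => restrictP _ (wordE n i)
  f := fun i => restrictP _ (wordF n i)
  ebar := restrictP _ (wordEbar n)
  fbar := restrictP _ (wordFbar n)
  e0 := restrictP _ wordE0
  f0 := restrictP _ wordF0

/-- Interpret a word as an element of `(𝔹⁺_n)^{⊗m}`. -/
def toPow : (m : ℕ) → List (ℕ × Bool) → PowT m
  | 0, _ => PUnit.unit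
  | m + 1, w => (toPow m w.dropLast, w.getLast?.getD (0, false))


/-! ### Involution words and increasing factorizations -/

/-- One step of the Demazure product. -/
def demStep (π : Equiv.Perm ℤ) (i : ℤ) : Equiv.Perm ℤ :=
  if π (i + 1) < π i then π else π * Equiv.swap i (i + 1)

/-- Demazure product `1 ∘ s_{a_1} ∘ ⋯ ∘ s_{a_m}`. -/
def dem (w : List ℤ) : Equiv.Perm ℤ := w.foldl demStep 1

/-- `s_{a_m} ∘ ⋯ ∘ s_{a_1} ∘ 1 ∘ s_{a_1} ∘ ⋯ ∘ s_{a_m}`. -/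
def invEnd (w : List ℤ) : Equiv.Perm ℤ := dem (w.reverse ++ w)

/-- `w` is an involution word for `z`. -/
def IsInvWord (z : Equiv.Perm ℤ) (w : List ℤ) : Prop :=
  invEnd w = z ∧ ∀ v : List ℤ, invEnd v = z → w.length ≤ v.length

/-- The (0-based) index `j` is a commutation of the involution word `w`. -/
def IsCommutation (w : List ℤ) (j : ℕ) : Prop :=
  invEnd (w.take j) (w.getD j 0) = w.getD j 0 ∧
  invEnd (w.take j) (w.getD j 0 + 1) = w.getD j 0 + 1

/-- Remove primes from a primed word. -/
def unpr (w : List PLetter) : List ℤ := w.map Prod.fst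

/-- `w` is a primed involution word for `z`. -/
def IsPrimedInvWord (z : Equiv.Perm ℤ) (w : List PLetter) : Prop :=
  IsInvWord z (unpr w) ∧
  ∀ j, j < w.length → (w.getD j default).2 = true → IsCommutation (unpr w) j

/-- Value of a primed letter, doubled: `i ↦ 2i`, `i′ ↦ 2i - 1`. -/
def pvZ (l : PLetter) : ℤ := 2 * l.1 - (if l.2 then 1 else 0)

def StrictIncrW (w : List PLetter) : Prop := List.Chain' (· < ·) (w.map pvZ)

/-- Concatenation `a¹a²⋯aⁿ` of a tuple of primed words. -/
def concatT {n : ℕ} (a : Fin n → List PLetter) : List PLetter := (List.ofFn a).flatten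

/-- Membership in `Incr⁺_n(z)`. -/
def IncrP (n : ℕ) (z : Equiv.Perm ℤ) (a : Fin n → List PLetter) : Prop :=
  (∀ i, StrictIncrW (a i)) ∧ IsPrimedInvWord z (concatT a)

/-- Letters of `v` left unpaired by the pairing of Definition 5.5. -/
def pairAvail (v w : List PLetter) : List PLetter :=
  w.reverse.foldl (fun avail wj =>
    match avail.find? (fun x => decide (wj.1 < x.1)) with
    | some x => avail.erase x
    | none => avail) v

/-- Letters of `w` left unpaired by the pairing of Definition 5.5 (in increasing order). -/
def unpairedSnd (v w : List PLetter) : List PLetter :=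
  (w.reverse.foldl (fun (st : List PLetter × List PLetter) wj =>
    match st.1.find? (fun x => decide (wj.1 < x.1)) with
    | some x => (st.1.erase x, st.2)
    | none => (st.1, wj :: st.2)) (v, [])).2

def smallestAbsentAux : ℕ → ℤ → List ℤ → ℤ
  | 0, y, _ => y
  | fuel + 1, y, s => if y ∈ s then smallestAbsentAux fuel (y + 1) s else y

/-- The smallest integer `≥ y` not occurring in `s`. -/
def smallestAbsent (y : ℤ) (s : List ℤ) : ℤ := smallestAbsentAux (s.length + 1) y s

def largestAbsentAux : ℕ → ℤ → List ℤ → ℤ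
  | 0, y, _ => y
  | fuel + 1, y, s => if y ∈ s then largestAbsentAux fuel (y - 1) s else y

/-- The largest integer `≤ y` not occurring in `s`. -/
def largestAbsent (y : ℤ) (s : List ℤ) : ℤ := largestAbsentAux (s.length + 1) y s

/-- Ordered insertion of a primed letter into a strictly increasing primed word. -/
def insLetter : PLetter → List PLetter → List PLetter
  | l, [] => [l]
  | l, x :: xs => if pvZ l ≤ pvZ x then l :: x :: xs else x :: insLetter l xs

/-- Prime adjustment in case (L2) of Definition 5.6. -/
def adjustF (x y : ℤ) (p : List PLetter × List PLetter) : List PLetter × List PLetter :=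
  (List.range (y - x).toNat).foldl (fun q k =>
    let t : ℤ := x + k
    if ((t + 1, false) : PLetter) ∈ q.1 ∧ ((t, true) : PLetter) ∈ q.2 then
      (q.1.map (fun l => if l = ((t + 1, false) : PLetter) then (t + 1, true) else l),
       q.2.map (fun l => if l = ((t, true) : PLetter) then (t, false) else l))
    else q) p

/-- Prime adjustment in case (R2) of Definition 5.7. -/
def adjustE (x y : ℤ) (p : List PLetter × List PLetter) : List PLetter × List PLetter :=
  (List.range (y - x).toNat).foldl (fun q k =>
    let t : ℤ := x + k
    if ((t + 1, true) : PLetter) ∈ q.1 ∧ ((t, false) : PLetter) ∈ q.2 then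
      (q.1.map (fun l => if l = ((t + 1, true) : PLetter) then (t + 1, false) else l),
       q.2.map (fun l => if l = ((t, false) : PLetter) then (t, true) else l))
    else q) p

def upd2 {n : ℕ} (a : Fin n → List PLetter) (i : Fin n) (v : List PLetter)
    (j : Fin n) (w : List PLetter) : Fin n → List PLetter :=
  Function.update (Function.update a i v) j w

/-- The lowering operator `f_i` on increasing factorizations (Definition 5.6). -/
def rawIncrF (n i : ℕ) (a : Fin n → List PLetter) : Option (Fin n → List PLetter) :=
  if h : 1 ≤ i ∧ i ≤ n - 1 then
    let i1 : Fin n := ⟨i - 1, by omega⟩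
    let i2 : Fin n := ⟨i, by omega⟩
    let v := a i1
    let w := a i2
    match (pairAvail v w).getLast? with
    | none => none
    | some x =>
      let y := smallestAbsent x.1 (unpr w)
      if x.2 then
        some (upd2 a i1 (v.erase x) i2 (insLetter (y, true) w))
      else
        let p := adjustF x.1 y (v.erase x, insLetter (y, false) w)
        some (upd2 a i1 p.1 i2 p.2)
  else none

/-- The raising operator `e_i` on increasing factorizations (Definition 5.7). -/
def rawIncrE (n i : ℕ) (a : Fin n → List PLetter) : Option (Fin n → List PLetter) :=
  if h : 1 ≤ i ∧ i ≤ n - 1 then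
    let i1 : Fin n := ⟨i - 1, by omega⟩
    let i2 : Fin n := ⟨i, by omega⟩
    let v := a i1
    let w := a i2
    match (unpairedSnd v w).getLast? with
    | none => none
    | some y =>
      let x := largestAbsent y.1 (unpr v)
      if y.2 then
        some (upd2 a i1 (insLetter (x, true) v) i2 (w.erase y))
      else
        let p := adjustE x y.1 (insLetter (x, false) v, w.erase y)
        some (upd2 a i1 p.1 i2 p.2)
  else none

/-- The lowering operator `f_1̄` on increasing factorizations (Definition 5.8). -/
def rawIncrFbar (n : ℕ) (a : Fin n → List PLetter) : Option (Fin n → List PLetter) :=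
  if h : 2 ≤ n then
    let i1 : Fin n := ⟨0, by omega⟩
    let i2 : Fin n := ⟨1, by omega⟩
    match a i1 with
    | [] => none
    | l :: rest =>
      if (a i2).all (fun m => decide (pvZ l < pvZ m)) then
        match rest with
        | r :: rs =>
          if l.2 ≠ r.2 then
            some (upd2 a i1 ((r.1, !r.2) :: rs) i2 ((l.1, !l.2) :: a i2))
          else some (upd2 a i1 rest i2 (l :: a i2))
        | [] => some (upd2 a i1 [] i2 (l :: a i2))
      else none
  else none

/-- The raising operator `e_1̄` on increasing factorizations (Definition 5.9). -/
def rawIncrEbar (n : ℕ) (a : Fin n → List PLetter) : Option (Fin n → List PLetter) :=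
  if h : 2 ≤ n then
    let i1 : Fin n := ⟨0, by omega⟩
    let i2 : Fin n := ⟨1, by omega⟩
    match a i2 with
    | [] => none
    | l :: rest2 =>
      if (a i1).all (fun m => decide (pvZ l < pvZ m)) then
        match a i1 with
        | r :: rs =>
          if l.2 ≠ r.2 then
            some (upd2 a i1 ((l.1, !l.2) :: (r.1, !r.2) :: rs) i2 rest2)
          else some (upd2 a i1 (l :: a i1) i2 rest2)
        | [] => some (upd2 a i1 [l] i2 rest2)
      else none
  else none

/-- The operator `f_0` on increasing factorizations (Definition 5.10). -/
def rawIncrF0 (n : ℕ) (a : Fin n → List PLetter) : Option (Fin n → List PLetter) :=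
  if h : 1 ≤ n then
    let i1 : Fin n := ⟨0, by omega⟩
    match a i1 with
    | [] => none
    | l :: rest =>
      if l.2 = false then some (Function.update a i1 ((l.1, true) :: rest)) else none
  else none

/-- The operator `e_0` on increasing factorizations (Definition 5.10). -/
def rawIncrE0 (n : ℕ) (a : Fin n → List PLetter) : Option (Fin n → List PLetter) :=
  if h : 1 ≤ n then
    let i1 : Fin n := ⟨0, by omega⟩
    match a i1 with
    | [] => none
    | l :: rest =>
      if l.2 = true then some (Function.update a i1 ((l.1, false) :: rest)) else none
  else none

/-- The `q⁺_n`-crystal `Incr⁺_n(z)`. -/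
noncomputable def incrC (n : ℕ) (z : Equiv.Perm ℤ) : Crystal n (Subtype (IncrP n z)) where
  wt := fun a k => if h : 1 ≤ k ∧ k ≤ n then ((a.1 ⟨k - 1, by omega⟩).length : ℤ) else 0
  e := fun i => restrictP _ (rawIncrE n i)
  f := fun i => restrictP _ (rawIncrF n i)
  ebar := restrictP _ (rawIncrEbar n)
  fbar := restrictP _ (rawIncrFbar n)
  e0 := restrictP _ (rawIncrE0 n)
  f0 := restrictP _ (rawIncrF0 n)


/-! ### Coxeter-Knuth operators, marked cycles, descents -/

/-- The action of `ock` on a 3-letter window. -/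
def ockTriple (a b c : PLetter) : PLetter × PLetter × PLetter :=
  if a.1 = c.1 ∧ (b.1 = a.1 + 1 ∨ b.1 + 1 = a.1) ∧ b.2 = false ∧ ¬(a.2 = true ∧ c.2 = true) then
    ((b.1, c.2), (a.1, false), (b.1, a.2))
  else if (a.1 < c.1 ∧ c.1 < b.1) ∨ (b.1 < c.1 ∧ c.1 < a.1) then (b, a, c)
  else if (c.1 < a.1 ∧ a.1 < b.1) ∨ (b.1 < a.1 ∧ a.1 < c.1) then (a, c, b)
  else (a, b, c)

/-- The orthogonal Coxeter-Knuth operator `ock_i` (with 1-based window positions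
`i, i+1, i+2` for `i ≥ 1`, and the initial-2-letter rule for `i = 0`). -/
def ock (i : ℕ) (w : List PLetter) : List PLetter :=
  if i = 0 then
    match w with
    | x :: y :: rest => (y.1, x.2) :: (x.1, y.2) :: rest
    | _ => w
  else if i + 2 ≤ w.length then
    let a := w.getD (i - 1) default
    let b := w.getD i default
    let c := w.getD (i + 1) default
    let t := ockTriple a b c
    w.take (i - 1) ++ [t.1, t.2.1, t.2.2] ++ w.drop (i + 2)
  else w

/-- The cycle `γ_j(w) = s_{w_m} ⋯ s_{w_{j+2}} s_{w_{j+1}} ({w_j, w_j + 1})` (0-based `j`). -/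
def gammaCyc (w : List ℤ) (j : ℕ) : Set ℤ :=
  let P : Equiv.Perm ℤ := (((w.drop (j + 1)).reverse).map (fun t => Equiv.swap t (t + 1))).prod
  {P (w.getD j 0), P (w.getD j 0 + 1)}

/-- The set of marked cycles of a primed involution word. -/
def markedOf (w : List PLetter) : Set (Set ℤ) :=
  {S | ∃ j, j < w.length ∧ (w.getD j default).2 = true ∧ S = gammaCyc (unpr w) j}

/-- Descent set of a primed word (1-based positions). -/
def DesSet (w : List PLetter) : Set ℕ :=
  {i | 1 ≤ i ∧ i + 1 ≤ w.length ∧ pvZ (w.getD i default) < pvZ (w.getD (i - 1) default)}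

/-! ### Unprimed pairing and reduced words (Lemmas 5.3 and 5.6) -/

/-- Letters of `v` left unpaired by the pairing of Definition 5.5, unprimed version. -/
def pairAvailZ (v w : List ℤ) : List ℤ :=
  w.reverse.foldl (fun avail wj =>
    match avail.find? (fun x => decide (wj < x)) with
    | some x => avail.erase x
    | none => avail) v

/-- The permutation `s_{a_1} s_{a_2} ⋯ s_{a_m}`. -/
def permOf (w : List ℤ) : Equiv.Perm ℤ := (w.map (fun i => Equiv.swap i (i + 1))).prod

/-- `w` is a reduced word (for some element of `S_ℤ`). -/
def IsReducedWord (w : List ℤ) : Prop :=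
  ∀ v : List ℤ, permOf v = permOf w → w.length ≤ v.length

/-- Ordered insertion of an integer into a strictly increasing integer word. -/
def insLetterZ : ℤ → List ℤ → List ℤ
  | x, [] => [x]
  | x, y :: ys => if x ≤ y then x :: y :: ys else y :: insLetterZ x ys


/-! ### Semistandard shifted tableaux and their crystal operators -/

/-- Doubled value of a tableau letter: `k ↦ 2k`, `k′ ↦ 2k - 1`. -/
def pvN (l : NLet) : ℤ := 2 * (l.1 : ℤ) - (if l.2 then 1 else 0)

/-- `lam` is a strict partition with at most `n` parts (coordinates `1,…,n`). -/
def IsStrictPart (n : ℕ) (lam : ℕ → ℕ) : Prop :=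
  (∀ i, i = 0 ∨ n < i → lam i = 0) ∧
  (∀ i, 1 ≤ i → (lam (i + 1) < lam i ∨ (lam i = 0 ∧ lam (i + 1) = 0)))

/-- Membership of a (1-based) box in the shifted diagram of `lam`. -/
abbrev InSD (lam : ℕ → ℕ) (p : ℕ × ℕ) : Prop :=
  1 ≤ p.1 ∧ p.1 ≤ p.2 ∧ p.2 < p.1 + lam p.1

/-- `T` is a semistandard shifted tableau of shape `lam` with entries at most `n`. -/
def IsShTab (n : ℕ) (lam : ℕ → ℕ) (T : Tab) : Prop :=
  (∀ p : ℕ × ℕ, (T p).isSome ↔ InSD lam p) ∧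
  (∀ p v, T p = some v → 1 ≤ v.1 ∧ v.1 ≤ n) ∧
  (∀ i j v w, T (i, j) = some v → T (i, j + 1) = some w →
    pvN v ≤ pvN w ∧ (pvN v = pvN w → v.2 = false)) ∧
  (∀ i j v w, T (i, j) = some v → T (i + 1, j) = some w →
    pvN v ≤ pvN w ∧ (pvN v = pvN w → v.2 = true))

def setE (T : Tab) (q : ℕ × ℕ) (l : NLet) : Tab := fun p => if p = q then some l else T p

def ceilIs (T : Tab) (q : ℕ × ℕ) (v : ℕ) : Bool :=
  match T q with
  | some l => l.1 == v
  | none => false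

/-- Boxes of `T` with entries in `{i′, i, (i+1)′, i+1}`, in shifted reading order. -/
def readBoxes (T : Tab) (i bnd : ℕ) : List (ℕ × ℕ) :=
  ((List.range bnd).reverse.map (fun k0 =>
    let k := k0 + 1
    ((List.range bnd).filterMap (fun r0 =>
      let r := r0 + 1
      match T (r, k) with
      | some (v, true) => if v = i ∨ v = i + 1 then some ((r, k) : ℕ × ℕ) else none
      | _ => none)) ++
    ((List.range bnd).filterMap (fun c0 =>
      let c := c0 + 1
      match T (k, c) with
      | some (v, false) => if v = i ∨ v = i + 1 then some ((k, c) : ℕ × ℕ) else none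
      | _ => none)))).flatten

/-- Unpaired boxes after the parenthesis matching (entries `i` are `)`, `i+1` are `(`). -/
def bracketBoxes (T : Tab) (i : ℕ) (l : List (ℕ × ℕ)) : List (ℕ × ℕ) :=
  let r := l.foldl (fun (st : List (ℕ × ℕ) × List (ℕ × ℕ)) q =>
    if ceilIs T q (i + 1) then (q :: st.1, st.2)
    else
      match st.1 with
      | _o :: os => (os, st.2)
      | [] => (st.1, q :: st.2)) ([], [])
  r.2.reverse ++ r.1.reverse

/-- Most-northwest box of the ribbon (within `inSet`) containing the given box. -/
def nwEnd (inSet : ℕ × ℕ → Bool) : ℕ → ℕ × ℕ → ℕ × ℕ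
  | 0, p => p
  | fuel + 1, p =>
    if inSet (p.1 + 1, p.2) = true then nwEnd inSet fuel (p.1 + 1, p.2)
    else if 1 ≤ p.2 ∧ inSet (p.1, p.2 - 1) = true then nwEnd inSet fuel (p.1, p.2 - 1)
    else p

/-- Walk southeast through a ribbon looking for the first box satisfying `pred`. -/
def seFind (inSet pred : ℕ × ℕ → Bool) : ℕ → ℕ × ℕ → Option (ℕ × ℕ)
  | 0, _ => none
  | fuel + 1, p =>
    if pred p = true then some p
    else if 2 ≤ p.1 ∧ inSet (p.1 - 1, p.2) = true then seFind inSet pred fuel (p.1 - 1, p.2)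
    else if inSet (p.1, p.2 + 1) = true then seFind inSet pred fuel (p.1, p.2 + 1)
    else none

/-- Interchange the primes on the entries in boxes `p` and `q`. -/
def swapPr (T : Tab) (p q : ℕ × ℕ) : Tab :=
  match T p, T q with
  | some a, some b => if a.2 ≠ b.2 then setE (setE T p (a.1, b.2)) q (b.1, a.2) else T
  | _, _ => T

/-- The lowering operator `f_i` on shifted tableaux (Definition 6.4). -/
def tabF (n bnd i : ℕ) (T : Tab) : Option Tab :=
  if 1 ≤ i ∧ i ≤ n - 1 then
    match ((bracketBoxes T i (readBoxes T i bnd)).filter (fun q => ceilIs T q i)).getLast? with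
    | none => none
    | some q =>
      let x := q.1
      let y := q.2
      match T q with
      | some (_, false) =>
        if T (x, y + 1) = some (i + 1, true) then
          some (setE (setE T q (i + 1, true)) (x, y + 1) (i + 1, false))
        else if ¬(ceilIs T (x + 1, y) (i + 1) = true) then
          some (setE T q (i + 1, false))
        else
          let nw := nwEnd (fun r => ceilIs T r (i + 1)) (2 * bnd + 2) (x + 1, y)
          if nw.1 ≠ nw.2 then
            some (setE (setE T q (i + 1, true)) nw (i + 1, false))
          else
            some (swapPr (setE T q (i + 1, true)) (nw.1, nw.1) (nw.1 - 1, nw.1 - 1))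
      | some (_, true) =>
        if T (x + 1, y) = some (i, false) then
          some (setE (setE T q (i, false)) (x + 1, y) (i + 1, true))
        else if ¬(T (x, y + 1) = some (i, false) ∨ T (x, y + 1) = some (i + 1, true)) then
          some (setE T q (i + 1, true))
        else
          match seFind (fun r => ceilIs T r i)
              (fun r => decide (T r = some (i, false) ∧
                ¬(T (r.1, r.2 + 1) = some (i, false) ∨ T (r.1, r.2 + 1) = some (i + 1, true))))
              (2 * bnd + 2) q with
          | some r => some (setE (setE T q (i, false)) r (i + 1, true))
          | none => none
      | none => none
  else none

/-- The lowering operator `f_1̄` on shifted tableaux (Definition 6.7). -/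
def tabFbar (n bnd : ℕ) (T : Tab) : Option Tab :=
  if 2 ≤ n then
    let row1 : List (ℕ × ℕ) := (List.range bnd).map (fun c => (1, c + 1))
    if row1.any (fun q => decide (T q = some (2, true))) then none
    else
      match (row1.filter (fun q => ceilIs T q 1)).getLast? with
      | none => none
      | some q =>
        if q.1 = q.2 ∧ T q = some (1, false) then some (setE T q (2, false))
        else some (setE T q (2, true))
  else none

/-- The operator `f_0` on shifted tableaux. -/
def tabF0 (T : Tab) : Option Tab :=
  if T (1, 1) = some (1, false) then some (setE T (1, 1) (1, true))
  else none

/-- The operator `e_0` on shifted tableaux. -/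
def tabE0 (T : Tab) : Option Tab :=
  if T (1, 1) = some (1, true) then some (setE T (1, 1) (1, false))
  else none

-- Partial inverse of a partial operator, via choice.
open Classical in
noncomputable def pInv {α : Type} (g : α → Option α) (y : α) : Option α :=
  if h : ∃ x, g x = some y then some h.choose else none

/-- The underlying type of `ShTab⁺_n(lam)`. -/
def ShTy (n : ℕ) (lam : ℕ → ℕ) : Type := Subtype (IsShTab n lam)

/-- The `q⁺_n`-crystal `ShTab⁺_n(lam)`. -/
noncomputable def shtabC (n : ℕ) (lam : ℕ → ℕ) : Crystal n (ShTy n lam) :=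
  let bnd := n + lam 1 + 2
  let fop : ℕ → ShTy n lam → Option (ShTy n lam) := fun i => restrictP _ (tabF n bnd i)
  let fbarop : ShTy n lam → Option (ShTy n lam) := restrictP _ (tabFbar n bnd)
  { wt := fun T k =>
      if 1 ≤ k ∧ k ≤ n then
        (((List.range bnd).map (fun r =>
          ((List.range bnd).filter (fun c => ceilIs T.1 (r + 1, c + 1) k)).length)).sum : ℤ)
      else 0
    f := fop
    e := fun i => pInv (fop i)
    fbar := fbarop
    ebar := pInv fbarop
    f0 := restrictP _ tabF0
    e0 := restrictP _ tabE0 }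

/-- The tableau `T^highest_lam`, with every entry in row `i` equal to `i`. -/
def highestTab (lam : ℕ → ℕ) : Tab := fun p => if InSD lam p then some (p.1, false) else none

def shiftLam (lam : ℕ → ℕ) (k : ℕ) : ℕ → ℕ := fun i => lam (i + k)

/-- The defining property of `T^lowest_lam`: a semistandard shifted tableau of shape `lam`
with no primed diagonal entries, whose entries on the `k`-th ribbon all equal
`(n-k)′` or `n-k`. -/
def IsLowestSpec (n : ℕ) (lam : ℕ → ℕ) (T : Tab) : Prop :=
  IsShTab n lam T ∧
  (∀ i v, T (i, i) = some v → v.2 = false) ∧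
  (∀ k, k < n → ∀ p : ℕ × ℕ, InSD (shiftLam lam k) p → ¬InSD (shiftLam lam (k + 1)) p →
    ∀ v, T p = some v → v.1 = n - k)

/-- Add a prime to every diagonal entry. -/
def primeDiag (T : Tab) : Tab := fun p =>
  if p.1 = p.2 then (T p).map (fun l => (l.1, true)) else T p


/-! ### Orthogonal Edelman-Greene insertion -/

def setZ (T : ZTab) (q : ℕ × ℕ) (l : PLetter) : ZTab := fun p => if p = q then some l else T p

def swapPrZ (T : ZTab) (p q : ℕ × ℕ) : ZTab :=
  match T p, T q with
  | some a, some b => if a.2 ≠ b.2 then setZ (setZ T p (a.1, b.2)) q (b.1, a.2) else T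
  | _, _ => T

/-- One insertion of a letter into a shifted tableau, per Definition 7.1; returns the
resulting tableau, the box added, and whether the process ended in column insertion. -/
def oegIns (bnd : ℕ) : ℕ → ZTab → Bool → ℕ → PLetter → ZTab × ((ℕ × ℕ) × Bool)
  | 0, T, isCol, _, _ => (T, ((0, 0), isCol))
  | fuel + 1, T, isCol, k, x =>
    let cells : List (ℕ × ℕ) :=
      if isCol then (List.range bnd).map (fun r => (r + 1, k))
      else (List.range bnd).map (fun c => (k, k + c))
    let filled := cells.filter (fun q => (T q).isSome)
    match filled.find? (fun q => decide (x.1 ≤ ((T q).getD default).1)) with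
    | none =>
      match cells.find? (fun q => (T q).isNone) with
      | none => (T, ((0, 0), isCol))
      | some q =>
        if q.1 = q.2 then (setZ T q (x.1, false), (q, isCol || x.2))
        else (setZ T q x, (q, isCol))
    | some qy =>
      let y := (T qy).getD default
      if y.1 = x.1 then
        let T' := match filled.find? (fun q => decide (x.1 < ((T q).getD default).1)) with
          | some qt => swapPrZ T qy qt
          | none => T
        oegIns bnd fuel T' (decide (qy.1 = qy.2)) (k + 1) (x.1 + 1, x.2)
      else
        if qy.1 = qy.2 then
          oegIns bnd fuel (setZ T qy (x.1, false)) true (k + 1) (y.1, y.2 || x.2)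
        else
          oegIns bnd fuel (setZ T qy x) false (k + 1) y

def emptyZTab : ZTab := fun _ => none
def emptyTab : Tab := fun _ => none

/-- The orthogonal Edelman-Greene insertion and recording tableaux `(P^O_EG(a), Q^O_EG(a))`. -/
def oegPQ (n : ℕ) (a : Fin n → List PLetter) : ZTab × Tab :=
  let letters : List (PLetter × ℕ) :=
    (List.ofFn (fun i : Fin n => (a i).map (fun l => (l, (i : ℕ) + 1)))).flatten
  let bnd := letters.length + 2
  letters.foldl (fun (PQ : ZTab × Tab) xl =>
    let r := oegIns bnd bnd PQ.1 false 1 xl.1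
    (r.1, setE PQ.2 r.2.1 (xl.2, r.2.2))) (emptyZTab, emptyTab)

def oegP (n : ℕ) (a : Fin n → List PLetter) : ZTab := (oegPQ n a).1
def oegQ (n : ℕ) (a : Fin n → List PLetter) : Tab := (oegPQ n a).2

/-! ### Disjoint unions of crystals -/

def sigmaC {n : ℕ} {ι : Type} {β : ι → Type} (Cf : ∀ i, Crystal n (β i)) :
    Crystal n (Σ i, β i) where
  wt := fun x => (Cf x.1).wt x.2
  e := fun k x => ((Cf x.1).e k x.2).map (fun b => ⟨x.1, b⟩)
  f := fun k x => ((Cf x.1).f k x.2).map (fun b => ⟨x.1, b⟩)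
  ebar := fun x => ((Cf x.1).ebar x.2).map (fun b => ⟨x.1, b⟩)
  fbar := fun x => ((Cf x.1).fbar x.2).map (fun b => ⟨x.1, b⟩)
  e0 := fun x => ((Cf x.1).e0 x.2).map (fun b => ⟨x.1, b⟩)
  f0 := fun x => ((Cf x.1).f0 x.2).map (fun b => ⟨x.1, b⟩)

/-- Involutions in `S_ℤ` (finitely supported permutations of `ℤ`). -/
def IZ : Type := {z : Equiv.Perm ℤ // z * z = 1 ∧ {i : ℤ | z i ≠ i}.Finite}

/-- The disjoint union `⊔_z Incr⁺_n(z)` over all involutions `z ∈ S_ℤ`. -/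
def DomT (n : ℕ) : Type := Σ z : IZ, Subtype (IncrP n z.1)

noncomputable def domC (n : ℕ) : Crystal n (DomT n) := sigmaC (fun z : IZ => incrC n z.1)

/-- Strict partitions in `ℕ^n`. -/
def SPart (n : ℕ) : Type := {lam : ℕ → ℕ // IsStrictPart n lam}

/-- The disjoint union `⊔_lam ShTab⁺_n(lam)` over all strict partitions `lam ∈ ℕ^n`. -/
def CodT (n : ℕ) : Type := Σ lam : SPart n, ShTy n lam.1

noncomputable def codC (n : ℕ) : Crystal n (CodT n) := sigmaC (fun lam : SPart n => shtabC n lam.1)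



/-! ### Auxiliary lemmas for Statement 14 -/

section Aux

open List

lemma demStep_of_desc {π : Equiv.Perm ℤ} {i : ℤ} (h : π (i + 1) < π i) : demStep π i = π :=
  if_pos h

lemma demStep_of_not_desc {π : Equiv.Perm ℤ} {i : ℤ} (h : ¬ π (i + 1) < π i) :
    demStep π i = π * Equiv.swap i (i + 1) := if_neg h

lemma demStep_of_asc {π : Equiv.Perm ℤ} {i : ℤ} (h : π i < π (i + 1)) :
    demStep π i = π * Equiv.swap i (i + 1) := if_neg (by omega)

lemma demStep_desc (π : Equiv.Perm ℤ) (i : ℤ) : (demStep π i) (i + 1) < (demStep π i) i := by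
  by_cases h : π (i + 1) < π i
  · rw [demStep_of_desc h]; exact h
  · rw [demStep_of_not_desc h]
    have hne : π i ≠ π (i + 1) := fun he => by have := π.injective he; omega
    simp only [Equiv.Perm.mul_apply, Equiv.swap_apply_left, Equiv.swap_apply_right]
    omega

lemma demStep_self (π : Equiv.Perm ℤ) (i : ℤ) : demStep (demStep π i) i = demStep π i :=
  demStep_of_desc (demStep_desc π i)


lemma mul_swap_apply_far (σ : Equiv.Perm ℤ) {i x : ℤ} (h1 : x ≠ i) (h2 : x ≠ i + 1) :
    (σ * Equiv.swap i (i + 1)) x = σ x := by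
  rw [Equiv.Perm.mul_apply, Equiv.swap_apply_of_ne_of_ne h1 h2]

lemma swap_far_comm {i j : ℤ} (hij : i + 2 ≤ j ∨ j + 2 ≤ i) :
    Equiv.swap i (i + 1) * Equiv.swap j (j + 1) =
      Equiv.swap j (j + 1) * Equiv.swap i (i + 1) := by
  ext x
  simp only [Equiv.Perm.mul_apply, Equiv.swap_apply_def]
  split_ifs <;> omega

lemma demStep_comm (π : Equiv.Perm ℤ) {i j : ℤ} (hij : i + 2 ≤ j ∨ j + 2 ≤ i) :
    demStep (demStep π i) j = demStep (demStep π j) i := by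
  by_cases hi : π (i + 1) < π i <;> by_cases hj : π (j + 1) < π j
  · conv_lhs => rw [demStep_of_desc hi, demStep_of_desc hj]
    conv_rhs => rw [demStep_of_desc hj, demStep_of_desc hi]
  · conv_lhs => rw [demStep_of_desc hi, demStep_of_not_desc hj]
    conv_rhs =>
      rw [demStep_of_not_desc hj,
        demStep_of_desc (show (π * Equiv.swap j (j + 1)) (i + 1) < (π * Equiv.swap j (j + 1)) i by
          rw [mul_swap_apply_far π (by omega) (by omega), mul_swap_apply_far π (by omega) (by omega)]
          exact hi)]
  · conv_lhs =>
      rw [demStep_of_not_desc hi,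
        demStep_of_desc (show (π * Equiv.swap i (i + 1)) (j + 1) < (π * Equiv.swap i (i + 1)) j by
          rw [mul_swap_apply_far π (by omega) (by omega), mul_swap_apply_far π (by omega) (by omega)]
          exact hj)]
    conv_rhs => rw [demStep_of_desc hj, demStep_of_not_desc hi]
  · conv_lhs =>
      rw [demStep_of_not_desc hi,
        demStep_of_not_desc
          (show ¬ (π * Equiv.swap i (i + 1)) (j + 1) < (π * Equiv.swap i (i + 1)) j by
            rw [mul_swap_apply_far π (by omega) (by omega),
              mul_swap_apply_far π (by omega) (by omega)]
            exact hj)]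
    conv_rhs =>
      rw [demStep_of_not_desc hj,
        demStep_of_not_desc
          (show ¬ (π * Equiv.swap j (j + 1)) (i + 1) < (π * Equiv.swap j (j + 1)) i by
            rw [mul_swap_apply_far π (by omega) (by omega),
              mul_swap_apply_far π (by omega) (by omega)]
            exact hi)]
    rw [mul_assoc, mul_assoc, swap_far_comm hij]

lemma swap_braid (i : ℤ) :
    Equiv.swap i (i + 1) * Equiv.swap (i + 1) (i + 2) * Equiv.swap i (i + 1) =
      Equiv.swap (i + 1) (i + 2) * Equiv.swap i (i + 1) * Equiv.swap (i + 1) (i + 2) := by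
  have h1 := Equiv.swap_mul_swap_mul_swap (x := i + 2) (y := i + 1) (z := i)
    (by omega) (by omega)
  have h2 := Equiv.swap_mul_swap_mul_swap (x := i) (y := i + 1) (z := i + 2)
    (by omega) (by omega)
  rw [Equiv.swap_comm (i + 1) i, Equiv.swap_comm (i + 2) (i + 1)] at h1
  rw [h1, h2, Equiv.swap_comm (i + 2) i]

lemma demStep_succ_of_desc {σ : Equiv.Perm ℤ} {i : ℤ} (h : σ (i + 2) < σ (i + 1)) :
    demStep σ (i + 1) = σ := by
  have h21 : i + 1 + 1 = i + 2 := by ring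
  exact demStep_of_desc (by rw [h21]; exact h)

lemma demStep_succ_of_asc {σ : Equiv.Perm ℤ} {i : ℤ} (h : σ (i + 1) < σ (i + 2)) :
    demStep σ (i + 1) = σ * Equiv.swap (i + 1) (i + 2) := by
  have h21 : i + 1 + 1 = i + 2 := by ring
  rw [demStep_of_asc (by rw [h21]; exact h), h21]

lemma demStep_braid (π : Equiv.Perm ℤ) (i : ℤ) :
    demStep (demStep (demStep π i) (i + 1)) i =
      demStep (demStep (demStep π (i + 1)) i) (i + 1) := by
  have ws1 : ∀ σ : Equiv.Perm ℤ, (σ * Equiv.swap i (i + 1)) i = σ (i + 1) := by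
    intro σ; rw [Equiv.Perm.mul_apply, Equiv.swap_apply_left]
  have ws2 : ∀ σ : Equiv.Perm ℤ, (σ * Equiv.swap i (i + 1)) (i + 1) = σ i := by
    intro σ; rw [Equiv.Perm.mul_apply, Equiv.swap_apply_right]
  have ws3 : ∀ σ : Equiv.Perm ℤ, (σ * Equiv.swap i (i + 1)) (i + 2) = σ (i + 2) := by
    intro σ; rw [Equiv.Perm.mul_apply, Equiv.swap_apply_of_ne_of_ne (by omega) (by omega)]
  have wt1 : ∀ σ : Equiv.Perm ℤ, (σ * Equiv.swap (i + 1) (i + 2)) i = σ i := by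
    intro σ; rw [Equiv.Perm.mul_apply, Equiv.swap_apply_of_ne_of_ne (by omega) (by omega)]
  have wt2 : ∀ σ : Equiv.Perm ℤ, (σ * Equiv.swap (i + 1) (i + 2)) (i + 1) = σ (i + 2) := by
    intro σ; rw [Equiv.Perm.mul_apply, Equiv.swap_apply_left]
  have wt3 : ∀ σ : Equiv.Perm ℤ, (σ * Equiv.swap (i + 1) (i + 2)) (i + 2) = σ (i + 1) := by
    intro σ; rw [Equiv.Perm.mul_apply, Equiv.swap_apply_right]
  have hab : π i ≠ π (i + 1) := fun h => by have := π.injective h; omega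
  have hbc : π (i + 1) ≠ π (i + 2) := fun h => by have := π.injective h; omega
  have hac : π i ≠ π (i + 2) := fun h => by have := π.injective h; omega
  rcases lt_trichotomy (π i) (π (i + 1)) with h1 | h1 | h1
  · -- a < b
    rcases lt_trichotomy (π (i + 1)) (π (i + 2)) with h2 | h2 | h2
    · -- case 6 : a < b < c
      conv_lhs =>
        rw [demStep_of_asc h1,
          demStep_succ_of_asc (show (π * Equiv.swap i (i + 1)) (i + 1) <
              (π * Equiv.swap i (i + 1)) (i + 2) by
            rw [ws3, ws2]; exact lt_trans h1 h2),
          demStep_of_asc (show (π * Equiv.swap i (i + 1) * Equiv.swap (i + 1) (i + 2)) i <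
              (π * Equiv.swap i (i + 1) * Equiv.swap (i + 1) (i + 2)) (i + 1) by
            rw [wt2, ws3, wt1, ws1]; exact h2)]
      conv_rhs =>
        rw [demStep_succ_of_asc h2,
          demStep_of_asc (show (π * Equiv.swap (i + 1) (i + 2)) i <
              (π * Equiv.swap (i + 1) (i + 2)) (i + 1) by
            rw [wt2, wt1]; exact lt_trans h1 h2),
          demStep_succ_of_asc (show (π * Equiv.swap (i + 1) (i + 2) * Equiv.swap i (i + 1))
                (i + 1) <
              (π * Equiv.swap (i + 1) (i + 2) * Equiv.swap i (i + 1)) (i + 2) by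
            rw [ws3, ws2, wt3, wt1]; exact h1)]
      simp only [mul_assoc]
      congr 1
      simpa only [mul_assoc] using swap_braid i
    · exact absurd h2 hbc
    · -- a < b, c < b
      rcases lt_trichotomy (π i) (π (i + 2)) with h3 | h3 | h3
      · -- case 4 : a < c < b
        conv_lhs =>
          rw [demStep_of_asc h1,
            demStep_succ_of_asc (show (π * Equiv.swap i (i + 1)) (i + 1) <
                (π * Equiv.swap i (i + 1)) (i + 2) by
              rw [ws3, ws2]; exact h3),
            demStep_of_desc (show (π * Equiv.swap i (i + 1) * Equiv.swap (i + 1) (i + 2)) (i + 1) <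
                (π * Equiv.swap i (i + 1) * Equiv.swap (i + 1) (i + 2)) i by
              rw [wt2, ws3, wt1, ws1]; exact h2)]
        conv_rhs =>
          rw [demStep_succ_of_desc h2,
            demStep_of_asc h1,
            demStep_succ_of_asc (show (π * Equiv.swap i (i + 1)) (i + 1) <
                (π * Equiv.swap i (i + 1)) (i + 2) by
              rw [ws3, ws2]; exact h3)]
      · exact absurd h3 hac
      · -- case 3 : c < a < b
        conv_lhs =>
          rw [demStep_of_asc h1,
            demStep_succ_of_desc (show (π * Equiv.swap i (i + 1)) (i + 2) <
                (π * Equiv.swap i (i + 1)) (i + 1) by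
              rw [ws3, ws2]; exact h3),
            demStep_of_desc (show (π * Equiv.swap i (i + 1)) (i + 1) <
                (π * Equiv.swap i (i + 1)) i by
              rw [ws2, ws1]; exact h1)]
        conv_rhs =>
          rw [demStep_succ_of_desc h2,
            demStep_of_asc h1,
            demStep_succ_of_desc (show (π * Equiv.swap i (i + 1)) (i + 2) <
                (π * Equiv.swap i (i + 1)) (i + 1) by
              rw [ws3, ws2]; exact h3)]
  · exact absurd h1 hab
  · -- b < a
    rcases lt_trichotomy (π (i + 1)) (π (i + 2)) with h2 | h2 | h2
    · -- b < c
      rcases lt_trichotomy (π i) (π (i + 2)) with h3 | h3 | h3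
      · -- case 5 : b < a < c
        conv_lhs =>
          rw [demStep_of_desc h1,
            demStep_succ_of_asc h2,
            demStep_of_asc (show (π * Equiv.swap (i + 1) (i + 2)) i <
                (π * Equiv.swap (i + 1) (i + 2)) (i + 1) by
              rw [wt2, wt1]; exact h3)]
        conv_rhs =>
          rw [demStep_succ_of_asc h2,
            demStep_of_asc (show (π * Equiv.swap (i + 1) (i + 2)) i <
                (π * Equiv.swap (i + 1) (i + 2)) (i + 1) by
              rw [wt2, wt1]; exact h3),
            demStep_succ_of_desc (show (π * Equiv.swap (i + 1) (i + 2) * Equiv.swap i (i + 1))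
                  (i + 2) <
                (π * Equiv.swap (i + 1) (i + 2) * Equiv.swap i (i + 1)) (i + 1) by
              rw [ws3, ws2, wt3, wt1]; exact h1)]
      · exact absurd h3 hac
      · -- case 2 : b < c < a
        conv_lhs =>
          rw [demStep_of_desc h1,
            demStep_succ_of_asc h2,
            demStep_of_desc (show (π * Equiv.swap (i + 1) (i + 2)) (i + 1) <
                (π * Equiv.swap (i + 1) (i + 2)) i by
              rw [wt2, wt1]; exact h3)]
        conv_rhs =>
          rw [demStep_succ_of_asc h2,
            demStep_of_desc (show (π * Equiv.swap (i + 1) (i + 2)) (i + 1) <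
                (π * Equiv.swap (i + 1) (i + 2)) i by
              rw [wt2, wt1]; exact h3),
            demStep_succ_of_desc (show (π * Equiv.swap (i + 1) (i + 2)) (i + 2) <
                (π * Equiv.swap (i + 1) (i + 2)) (i + 1) by
              rw [wt3, wt2]; exact h2)]
    · exact absurd h2 hbc
    · -- case 1 : c < b < a
      conv_lhs =>
        rw [demStep_of_desc h1, demStep_succ_of_desc h2, demStep_of_desc h1]
      conv_rhs =>
        rw [demStep_succ_of_desc h2, demStep_of_desc h1, demStep_succ_of_desc h2]

lemma foldl_demStep_comm (k : ℤ) (xs : List ℤ) (π : Equiv.Perm ℤ)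
    (h : ∀ x ∈ xs, x + 2 ≤ k ∨ k + 2 ≤ x) :
    List.foldl demStep (demStep π k) xs = demStep (List.foldl demStep π xs) k := by
  induction xs generalizing π with
  | nil => simp
  | cons x xs ih =>
    simp only [List.foldl_cons]
    rw [demStep_comm π (Or.symm (h x List.mem_cons_self)),
      ih _ (fun y hy => h y (List.mem_cons_of_mem x hy))]

lemma invEnd_eq (w : List ℤ) :
    invEnd w = List.foldl demStep (List.foldl demStep 1 w.reverse) w := by
  rw [invEnd, dem, List.foldl_append]

lemma invEnd_dedup (u v : List ℤ) (s : ℤ) :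
    invEnd (u ++ s :: s :: v) = invEnd (u ++ s :: v) := by
  rw [invEnd_eq, invEnd_eq]
  simp only [List.reverse_append, List.reverse_cons, List.append_assoc, List.cons_append,
    List.nil_append, List.foldl_append, List.foldl_cons, List.foldl_nil, demStep_self]

lemma invEnd_far (k : ℤ) (xs v : List ℤ) (h : ∀ x ∈ xs, k + 2 ≤ x) :
    invEnd ((k :: xs) ++ k :: v) = invEnd ((k :: xs) ++ v) := by
  have hfar : ∀ x ∈ xs, x + 2 ≤ k ∨ k + 2 ≤ x := fun x hx => Or.inr (h x hx)
  have hfarr : ∀ x ∈ xs.reverse, x + 2 ≤ k ∨ k + 2 ≤ x :=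
    fun x hx => hfar x (List.mem_reverse.1 hx)
  rw [invEnd_eq, invEnd_eq]
  simp only [List.reverse_append, List.reverse_cons, List.append_assoc, List.cons_append,
    List.nil_append, List.foldl_append, List.foldl_cons, List.foldl_nil, demStep_self]
  rw [foldl_demStep_comm k xs.reverse _ hfarr]
  simp only [demStep_self]
  rw [foldl_demStep_comm k xs _ hfar]
  simp only [demStep_self]

lemma demStep_absorb (σ : Equiv.Perm ℤ) (k : ℤ) :
    demStep (demStep (demStep (demStep σ (k + 1)) k) (k + 1)) k =
      demStep (demStep (demStep σ (k + 1)) k) (k + 1) := by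
  rw [demStep_braid (demStep σ (k + 1)) k, demStep_self]

lemma invEnd_braid (k : ℤ) (ys v : List ℤ) (h : ∀ x ∈ ys, k + 2 ≤ x) :
    invEnd ((k :: (k + 1) :: ys) ++ k :: v) = invEnd ((k :: (k + 1) :: ys) ++ v) := by
  have hfar : ∀ x ∈ ys, x + 2 ≤ k ∨ k + 2 ≤ x := fun x hx => Or.inr (h x hx)
  have hfarr : ∀ x ∈ ys.reverse, x + 2 ≤ k ∨ k + 2 ≤ x :=
    fun x hx => hfar x (List.mem_reverse.1 hx)
  rw [invEnd_eq, invEnd_eq]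
  simp only [List.reverse_append, List.reverse_cons, List.append_assoc, List.cons_append,
    List.nil_append, List.foldl_append, List.foldl_cons, List.foldl_nil, demStep_self]
  rw [foldl_demStep_comm k ys.reverse _ hfarr]
  rw [demStep_braid]
  simp only [demStep_self]
  rw [← foldl_demStep_comm k ys _ hfar]
  rw [demStep_absorb]

lemma adj_ne_of_invWord {z : Equiv.Perm ℤ} {w : List ℤ} (hw : IsInvWord z w)
    {u v : List ℤ} {s t : ℤ} (he : w = u ++ s :: t :: v) : s ≠ t := by
  rintro rfl
  have h2 := hw.2 (u ++ s :: v) (by rw [← invEnd_dedup u v s, ← he, hw.1])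
  rw [he] at h2
  simp only [List.length_append, List.length_cons] at h2
  omega

lemma pattern_impossible {z : Equiv.Perm ℤ} {w : List ℤ} (hw : IsInvWord z w)
    {k : ℤ} {xs v : List ℤ} (he : w = (k :: xs) ++ k :: v)
    (hxs : (∀ x ∈ xs, k + 2 ≤ x) ∨ (∃ ys, xs = (k + 1) :: ys ∧ ∀ x ∈ ys, k + 2 ≤ x)) :
    False := by
  have hz : invEnd ((k :: xs) ++ v) = z := by
    rcases hxs with h | ⟨ys, rfl, h⟩
    · rw [← invEnd_far k xs v h, ← he, hw.1]
    · rw [← invEnd_braid k ys v h, ← he, hw.1]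
  have h2 := hw.2 _ hz
  rw [he] at h2
  simp only [List.length_append, List.length_cons] at h2
  omega

lemma ock_zero (x y : PLetter) (t : List PLetter) :
    ock 0 (x :: y :: t) = (y.1, x.2) :: (x.1, y.2) :: t := by
  simp [ock]

lemma ockTriple_rot (A B C : PLetter) (h1 : B.1 < A.1) (h2 : A.1 < C.1) :
    ockTriple A B C = (A, C, B) := by
  unfold ockTriple
  rw [if_neg (fun h => absurd h.1 (by omega)),
    if_neg (by rintro (⟨h3, h4⟩ | ⟨h3, h4⟩) <;> omega),
    if_pos (Or.inr ⟨h1, h2⟩)]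

lemma getD_mid (P L : List PLetter) (r : ℕ) :
    (P ++ L).getD (P.length + r) default = L.getD r default := by
  rw [List.getD_append_right _ _ _ _ (Nat.le_add_right _ _), Nat.add_sub_cancel_left]

lemma ock_at (P : List PLetter) (A B C : PLetter) (S : List PLetter) :
    ock (P.length + 1) (P ++ A :: B :: C :: S) =
      P ++ (ockTriple A B C).1 :: (ockTriple A B C).2.1 :: (ockTriple A B C).2.2 :: S := by
  have hlen : P.length + 1 + 2 ≤ (P ++ A :: B :: C :: S).length := by
    simp only [List.length_append, List.length_cons]
    omega
  have hne : P.length + 1 ≠ 0 := Nat.succ_ne_zero _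
  have e0 : P.length + 1 - 1 = P.length + 0 := rfl
  have e1 : P.length + 1 + 1 = P.length + 2 := rfl
  have e2 : P.length + 1 + 2 = P.length + 3 := rfl
  unfold ock
  rw [if_neg hne, if_pos hlen, e0, e1, e2]
  rw [getD_mid, getD_mid, getD_mid]
  rw [show (P ++ A :: B :: C :: S).take (P.length + 0) = P from List.take_left' (by omega),
    show (P ++ A :: B :: C :: S).drop (P.length + 3) = S from by
      rw [show P ++ A :: B :: C :: S = (P ++ [A, B, C]) ++ S by simp]
      exact List.drop_left' (by simp)]
  simp only [List.getD_cons_zero, List.getD_cons_succ]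
  simp

lemma fold_ock_move (B : PLetter) (S : List PLetter) :
    ∀ (c : List PLetter) (P₀ : List PLetter) (A : PLetter),
    B.1 < A.1 → List.Chain' (· < ·) ((A :: c).map (·.1)) →
    List.foldl (fun u j => ock j u) (P₀ ++ A :: B :: (c ++ S))
        (List.range' (P₀.length + 1) c.length)
      = P₀ ++ A :: (c ++ B :: S) := by
  intro c
  induction c with
  | nil => intro P₀ A h1 h2; simp
  | cons x c ih =>
    intro P₀ A h1 h2
    have hAx : A.1 < x.1 := (List.isChain_cons_cons.1 h2).1
    rw [List.length_cons, List.range'_succ, List.foldl_cons]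
    have : (P₀ ++ A :: B :: (x :: c ++ S)) = P₀ ++ A :: B :: x :: (c ++ S) := by simp
    rw [this, ock_at, ockTriple_rot A B x h1 hAx]
    have : P₀ ++ A :: x :: B :: (c ++ S) = (P₀ ++ [A]) ++ x :: B :: (c ++ S) := by simp
    rw [this]
    have hlen : (P₀ ++ [A]).length + 1 = P₀.length + 1 + 1 := by simp
    rw [← hlen]
    rw [ih (P₀ ++ [A]) x (lt_trans h1 hAx) (by
      have := (List.isChain_cons_cons.1 h2).2
      simpa [List.Chain'] using this)]
    simp

lemma unpr_append (L M : List PLetter) : unpr (L ++ M) = unpr L ++ unpr M :=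
  List.map_append

lemma unpr_cons (x : PLetter) (L : List PLetter) : unpr (x :: L) = x.1 :: unpr L := rfl

lemma pvZ_lt_fst_le {x y : PLetter} (h : pvZ x < pvZ y) : x.1 ≤ y.1 := by
  simp only [pvZ] at h
  split_ifs at h <;> omega

lemma chain_val_of_invWord {z : Equiv.Perm ℤ} {W : List ℤ} (hW : IsInvWord z W) :
    ∀ (L : List PLetter) (pre suf : List ℤ), W = pre ++ (unpr L ++ suf) →
      List.Chain' (· < ·) (L.map pvZ) → List.Chain' (· < ·) (L.map (·.1)) := by
  intro L
  induction L with
  | nil => intro _ _ _ _; simp [List.Chain']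
  | cons x L ih =>
    intro pre suf hWe hch
    cases L with
    | nil => simp [List.Chain']
    | cons y L' =>
      rw [List.map_cons, List.map_cons, List.Chain', List.isChain_cons_cons]
      constructor
      · have hle : x.1 ≤ y.1 :=
          pvZ_lt_fst_le (List.isChain_cons_cons.1 (by simpa [List.Chain'] using hch)).1
        have hne : x.1 ≠ y.1 := by
          refine adj_ne_of_invWord hW (u := pre) (v := unpr L' ++ suf) ?_
          rw [hWe]; simp [unpr]
        omega
      · have := ih (pre ++ [x.1]) suf (by rw [hWe]; simp [unpr]) (by
          have := (List.isChain_cons_cons.1 (by simpa using hch : List.Chain' (· < ·)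
            (pvZ x :: (y :: L').map pvZ))).2
          simpa [List.Chain'] using this)
        simpa [List.Chain'] using this

lemma concat_two (m : ℕ) (a : Fin (m + 2) → List PLetter) :
    concatT a = a 0 ++ (a 1 ++ (List.ofFn (fun i : Fin m => a i.succ.succ)).flatten) := by
  rw [concatT, List.ofFn_succ, List.ofFn_succ]
  simp [Fin.succ_zero_eq_one]

lemma upd2_zero (m : ℕ) (a : Fin (m + 2) → List PLetter) (h0 : 0 < m + 2) (h1 : 1 < m + 2)
    (v w : List PLetter) : upd2 a ⟨0, h0⟩ v ⟨1, h1⟩ w 0 = v := by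
  have e0 : (⟨0, h0⟩ : Fin (m + 2)) = 0 := by ext; simp
  have e1 : (⟨1, h1⟩ : Fin (m + 2)) = 1 := by ext; simp
  rw [upd2, e0, e1, Function.update_of_ne (by simp), Function.update_self]

lemma upd2_one (m : ℕ) (a : Fin (m + 2) → List PLetter) (h0 : 0 < m + 2) (h1 : 1 < m + 2)
    (v w : List PLetter) : upd2 a ⟨0, h0⟩ v ⟨1, h1⟩ w 1 = w := by
  have e1 : (⟨1, h1⟩ : Fin (m + 2)) = 1 := by ext; simp
  rw [upd2, e1, Function.update_self]

lemma upd2_succ (m : ℕ) (a : Fin (m + 2) → List PLetter) (h0 : 0 < m + 2) (h1 : 1 < m + 2)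
    (v w : List PLetter) (i : Fin m) : upd2 a ⟨0, h0⟩ v ⟨1, h1⟩ w i.succ.succ = a i.succ.succ := by
  have n1 : (i.succ.succ : Fin (m + 2)) ≠ ⟨1, h1⟩ := by
    intro h; have := congrArg Fin.val h; simp [Fin.val_succ] at this
  have n0 : (i.succ.succ : Fin (m + 2)) ≠ ⟨0, h0⟩ := by
    intro h; have := congrArg Fin.val h; simp [Fin.val_succ] at this
  rw [upd2, Function.update_of_ne n1, Function.update_of_ne n0]

lemma upd2_concat (m : ℕ) (a : Fin (m + 2) → List PLetter) (h0 : 0 < m + 2) (h1 : 1 < m + 2)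
    (v w : List PLetter) :
    concatT (upd2 a ⟨0, h0⟩ v ⟨1, h1⟩ w) =
      v ++ (w ++ (List.ofFn (fun i : Fin m => a i.succ.succ)).flatten) := by
  rw [concat_two, upd2_zero, upd2_one]
  simp only [upd2_succ]

lemma rawIncrFbar_def (n : ℕ) (hn : 2 ≤ n) (a : Fin n → List PLetter) :
    rawIncrFbar n a =
      (match a ⟨0, by omega⟩ with
      | [] => none
      | l :: rest =>
        if (a ⟨1, by omega⟩).all (fun x => decide (pvZ l < pvZ x)) then
          match rest with
          | r :: rs =>
            if l.2 ≠ r.2 then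
              some (upd2 a ⟨0, by omega⟩ ((r.1, !r.2) :: rs) ⟨1, by omega⟩
                ((l.1, !l.2) :: a ⟨1, by omega⟩))
            else some (upd2 a ⟨0, by omega⟩ rest ⟨1, by omega⟩ (l :: a ⟨1, by omega⟩))
          | [] => some (upd2 a ⟨0, by omega⟩ [] ⟨1, by omega⟩ (l :: a ⟨1, by omega⟩))
        else none) := by
  rw [rawIncrFbar, dif_pos hn]

lemma pairwise_of_pvZ_chain {L : List PLetter} (hch : List.Chain' (· < ·) (L.map pvZ)) :
    List.Pairwise (fun x y : PLetter => pvZ x < pvZ y) L := by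
  have : List.Pairwise (· < ·) (L.map pvZ) := List.isChain_iff_pairwise.1 hch
  exact (List.pairwise_map.1 this)

lemma rawIncrFbar_def2 (m : ℕ) (a : Fin (m + 2) → List PLetter) :
    rawIncrFbar (m + 2) a =
      (match a 0 with
      | [] => none
      | l :: rest =>
        if (a 1).all (fun x => decide (pvZ l < pvZ x)) then
          match rest with
          | r :: rs =>
            if l.2 ≠ r.2 then
              some (upd2 a 0 ((r.1, !r.2) :: rs) 1 ((l.1, !l.2) :: a 1))
            else some (upd2 a 0 rest 1 (l :: a 1))
          | [] => some (upd2 a 0 [] 1 (l :: a 1))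
        else none) := by
  rw [rawIncrFbar, dif_pos (by omega : 2 ≤ m + 2)]
  rfl

lemma rawIncrFbar_nil (m : ℕ) (a : Fin (m + 2) → List PLetter) (h : a 0 = []) :
    rawIncrFbar (m + 2) a = none := by
  rw [rawIncrFbar_def2, h]

lemma rawIncrFbar_cons1 (m : ℕ) (a : Fin (m + 2) → List PLetter) (l : PLetter)
    (h : a 0 = [l]) :
    rawIncrFbar (m + 2) a =
      (if (a 1).all (fun x => decide (pvZ l < pvZ x)) then
        some (upd2 a 0 [] 1 (l :: a 1))
      else none) := by
  rw [rawIncrFbar_def2, h]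

lemma rawIncrFbar_cons2 (m : ℕ) (a : Fin (m + 2) → List PLetter) (l r : PLetter)
    (rs : List PLetter) (h : a 0 = l :: r :: rs) :
    rawIncrFbar (m + 2) a =
      (if (a 1).all (fun x => decide (pvZ l < pvZ x)) then
        if l.2 ≠ r.2 then
          some (upd2 a 0 ((r.1, !r.2) :: rs) 1 ((l.1, !l.2) :: a 1))
        else some (upd2 a 0 (r :: rs) 1 (l :: a 1))
      else none) := by
  rw [rawIncrFbar_def2, h]

lemma upd2_concat' (m : ℕ) (a : Fin (m + 2) → List PLetter) (v w : List PLetter) :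
    concatT (upd2 a (0 : Fin (m + 2)) v (1 : Fin (m + 2)) w) =
      v ++ (w ++ (List.ofFn (fun i : Fin m => a i.succ.succ)).flatten) :=
  upd2_concat m a (by omega) (by omega) v w

lemma pvZ_eq_fst {x y : PLetter} (h : pvZ x = pvZ y) : x.1 = y.1 := by
  simp only [pvZ] at h
  split_ifs at h <;> omega

lemma main_aux (m : ℕ) (z : Equiv.Perm ℤ) (a : Fin (m + 2) → List PLetter)
    (ha : IncrP (m + 2) z a) (q : ℕ) (w : List PLetter)
    (hq : q = (a 0).length)
    (hw : w = (List.range (q - 1)).foldl (fun u j => ock j u) (concatT a)) :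
    ((q = 0 ∨ (a 1 ≠ [] ∧ q ∈ DesSet w)) → rawIncrFbar (m + 2) a = none) ∧
    (¬(q = 0 ∨ (a 1 ≠ [] ∧ q ∈ DesSet w)) →
      ∃ b, rawIncrFbar (m + 2) a = some b ∧ concatT b = w) := by
  obtain ⟨hinc, hpiw⟩ := ha
  have hW : IsInvWord z (unpr (concatT a)) := hpiw.1
  set R := (List.ofFn (fun i : Fin m => a i.succ.succ)).flatten with hR
  have hcc : concatT a = a 0 ++ (a 1 ++ R) := concat_two m a
  cases hA0 : a 0 with
  | nil =>
    have hq0 : q = 0 := by rw [hq, hA0]; rfl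
    exact ⟨fun _ => rawIncrFbar_nil m a hA0, fun hcon => absurd (Or.inl hq0) hcon⟩
  | cons l rest =>
    have hch1 : List.Chain' (· < ·) ((a 1).map pvZ) := hinc 1
    cases rest with
    | nil =>
      -- q = 1
      have hdef := rawIncrFbar_cons1 m a l hA0
      have hq1 : q = 1 := by rw [hq, hA0]; rfl
      have hwcc : w = concatT a := by rw [hw, hq1]; rfl
      cases hA1 : a 1 with
      | nil =>
        constructor
        · rintro (h | ⟨h, -⟩)
          · exact absurd h (by omega)
          · exact absurd rfl h
        · intro _
          refine ⟨_, by rw [hdef, if_pos (by rw [hA1]; rfl)], ?_⟩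
          rw [upd2_concat', hwcc, hcc, hA0, hA1]
          simp [hR]
      | cons m0 t2 =>
        have hwform : w = l :: (m0 :: (t2 ++ R)) := by
          rw [hwcc, hcc, hA0, hA1]; simp
        have hne1 : l.1 ≠ m0.1 := by
          refine adj_ne_of_invWord hW (u := []) (v := unpr t2 ++ unpr R) ?_
          rw [hcc, hA0, hA1]
          simp [unpr]
        have hlen1 : 1 + 1 ≤ w.length := by rw [hwform]; simp
        have hdes : q ∈ DesSet w ↔ pvZ m0 < pvZ l := by
          rw [hq1]
          simp only [DesSet, Set.mem_setOf_eq, hwform]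
          constructor
          · rintro ⟨-, -, h⟩; simpa using h
          · intro h; exact ⟨le_refl _, by simpa using hlen1, by simpa using h⟩
        constructor
        · rintro (h | ⟨-, hdes'⟩)
          · exact absurd h (by omega)
          · have hlt := hdes.1 hdes'
            rw [hdef, if_neg ?_]
            intro hall
            have := List.all_eq_true.1 hall m0 (by rw [hA1]; exact List.mem_cons_self)
            have h2 := of_decide_eq_true this
            omega
        · intro hcon
          have hndes : q ∉ DesSet w := fun hd => hcon (Or.inr ⟨by simp, hd⟩)
          have hnlt : ¬ pvZ m0 < pvZ l := fun h => hndes (hdes.2 h)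
          have hneq : pvZ l ≠ pvZ m0 := fun h => hne1 (pvZ_eq_fst h)
          have hlm0 : pvZ l < pvZ m0 := by omega
          have hall : ((a 1).all fun x => decide (pvZ l < pvZ x)) = true := by
            apply List.all_eq_true.2
            intro x hx
            apply decide_eq_true
            rw [hA1] at hx
            rcases List.mem_cons.1 hx with rfl | hx2
            · exact hlm0
            · have hpw := pairwise_of_pvZ_chain hch1
              rw [hA1] at hpw
              exact lt_trans hlm0 ((List.pairwise_cons.1 hpw).1 x hx2)
          refine ⟨_, by rw [hdef, if_pos hall], ?_⟩
          rw [upd2_concat', hwform, hA1]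
          simp [hR]
    | cons r tl =>
      -- q ≥ 2
      have hdef := rawIncrFbar_cons2 m a l r tl hA0
      have hq2 : q = tl.length + 2 := by rw [hq, hA0]; simp
      have hch0 : List.Chain' (· < ·) ((a 0).map pvZ) := hinc 0
      have hval0 : List.Chain' (· < ·) ((a 0).map (·.1)) := by
        refine chain_val_of_invWord hW (a 0) [] (unpr (a 1 ++ R)) ?_ hch0
        rw [hcc]; simp [unpr_append]
      rw [hA0] at hval0
      have hval0' : List.Chain' (· < ·) (l.1 :: r.1 :: tl.map (·.1)) := by
        simpa using hval0
      have hpw0 := List.isChain_iff_pairwise.1 hval0'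
      have hlr : l.1 < r.1 := (List.pairwise_cons.1 hpw0).1 r.1 (by simp)
      have hvals_tl : ∀ x ∈ tl, r.1 < x.1 := fun x hx =>
        (List.pairwise_cons.1 (List.pairwise_cons.1 hpw0).2).1 x.1 (List.mem_map_of_mem hx)
      have hchtl : List.Chain' (· < ·) (((r.1, l.2) :: tl).map (·.1)) := by
        have := (List.isChain_cons_cons.1 hval0').2
        simpa [List.Chain'] using this
      have hwform : w = (r.1, l.2) :: (tl ++ ((l.1, r.2) :: (a 1 ++ R))) := by
        rw [hw, hq2, hcc, hA0,
          show (l :: r :: tl) ++ (a 1 ++ R) = l :: r :: (tl ++ (a 1 ++ R)) by simp,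
          show tl.length + 2 - 1 = tl.length + 1 from rfl,
          List.range_eq_range', List.range'_succ]
        simp only [List.foldl_cons]
        rw [ock_zero]
        have := fold_ock_move (l.1, r.2) (a 1 ++ R) tl [] (r.1, l.2) (by simpa using hlr) hchtl
        simpa using this
      cases hA1 : a 1 with
      | nil =>
        constructor
        · rintro (h | ⟨h, -⟩)
          · exact absurd h (by omega)
          · exact absurd rfl h
        · intro _
          rw [hdef, if_pos (by rw [hA1]; rfl)]
          by_cases hb : l.2 = r.2
          · rw [if_neg (by simpa using hb)]
            refine ⟨_, rfl, ?_⟩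
            rw [upd2_concat', hwform,
              show ((r.1, l.2) : PLetter) = r by rw [hb],
              show ((l.1, r.2) : PLetter) = l by rw [← hb]]
            simp [← hR]
          · rw [if_pos (by simpa using hb)]
            refine ⟨_, rfl, ?_⟩
            have hb1 : (!r.2) = l.2 := by
              cases hx : l.2 <;> cases hy : r.2 <;> simp_all
            have hb2 : (!l.2) = r.2 := by
              cases hx : l.2 <;> cases hy : r.2 <;> simp_all
            rw [upd2_concat', hwform, hb1, hb2]
            simp [← hR]
      | cons m0 t2 =>
        have hlen : q + 1 ≤ w.length := by
          rw [hq2]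
          simp only [hwform, hA1, List.length_cons, List.length_append]
          omega
        have hget1 : w.getD (q - 1) default = (l.1, r.2) := by
          rw [hwform, hq2, show tl.length + 2 - 1 = tl.length + 1 from rfl,
            List.getD_cons_succ]
          simpa using getD_mid tl ((l.1, r.2) :: (a 1 ++ R)) 0
        have hget2 : w.getD q default = m0 := by
          rw [hwform, hq2, show tl.length + 2 = (tl.length + 1) + 1 from rfl,
            List.getD_cons_succ]
          have := getD_mid tl ((l.1, r.2) :: (a 1 ++ R)) 1
          simpa [hA1] using this
        have hdes : q ∈ DesSet w ↔ pvZ m0 < pvZ (l.1, r.2) := by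
          simp only [DesSet, Set.mem_setOf_eq, hget1, hget2]
          constructor
          · rintro ⟨-, -, h⟩; exact h
          · intro h; exact ⟨by omega, hlen, h⟩
        constructor
        · rintro (h | ⟨-, hdes'⟩)
          · exact absurd h (by omega)
          · have hlt := hdes.1 hdes'
            have hnall : ¬ pvZ l < pvZ m0 := by
              simp only [pvZ] at hlt ⊢
              split_ifs at hlt ⊢ <;> omega
            rw [hdef, if_neg ?_]
            intro hall
            have := List.all_eq_true.1 hall m0 (by rw [hA1]; exact List.mem_cons_self)
            exact hnall (of_decide_eq_true this)
        · intro hcon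
          have hndes : q ∉ DesSet w := fun hd => hcon (Or.inr ⟨by simp, hd⟩)
          have hge : pvZ (l.1, r.2) ≤ pvZ m0 := by
            by_contra hlt2
            exact hndes (hdes.2 (by omega))
          have hm0 : l.1 < m0.1 := by
            have h1 : l.1 ≤ m0.1 := by
              simp only [pvZ] at hge
              split_ifs at hge <;> omega
            rcases lt_or_eq_of_le h1 with h | heq
            · exact h
            exfalso
            refine pattern_impossible hW (k := l.1) (xs := r.1 :: unpr tl)
              (v := unpr t2 ++ unpr R) ?_ ?_
            · rw [hcc, hA0, hA1]
              simp [unpr, ← heq]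
            · rcases (by omega : r.1 = l.1 + 1 ∨ l.1 + 2 ≤ r.1) with hr | hr
              · right
                refine ⟨unpr tl, by rw [hr], ?_⟩
                intro x hx
                obtain ⟨y, hy, rfl⟩ := List.mem_map.1 hx
                have := hvals_tl y hy
                omega
              · left
                intro x hx
                rcases List.mem_cons.1 hx with rfl | hx2
                · exact hr
                · obtain ⟨y, hy, rfl⟩ := List.mem_map.1 hx2
                  have := hvals_tl y hy
                  omega
          have hlm0 : pvZ l < pvZ m0 := by
            simp only [pvZ]
            split_ifs <;> omega
          have hall : ((a 1).all fun x => decide (pvZ l < pvZ x)) = true := by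
            apply List.all_eq_true.2
            intro x hx
            apply decide_eq_true
            rw [hA1] at hx
            rcases List.mem_cons.1 hx with rfl | hx2
            · exact hlm0
            · have hpw := pairwise_of_pvZ_chain hch1
              rw [hA1] at hpw
              exact lt_trans hlm0 ((List.pairwise_cons.1 hpw).1 x hx2)
          rw [hdef, if_pos hall]
          by_cases hb : l.2 = r.2
          · rw [if_neg (by simpa using hb)]
            refine ⟨_, rfl, ?_⟩
            rw [upd2_concat', hwform,
              show ((r.1, l.2) : PLetter) = r by rw [hb],
              show ((l.1, r.2) : PLetter) = l by rw [← hb]]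
            simp [← hR]
          · rw [if_pos (by simpa using hb)]
            refine ⟨_, rfl, ?_⟩
            have hb1 : (!r.2) = l.2 := by
              cases hx : l.2 <;> cases hy : r.2 <;> simp_all
            have hb2 : (!l.2) = r.2 := by
              cases hx : l.2 <;> cases hy : r.2 <;> simp_all
            rw [upd2_concat', hwform, hb1, hb2]
            simp [← hR]

end Aux


/-- (Lemma 5.17.) Let `a ∈ Incr⁺_n(z)`, `q := ℓ(a¹)`, and
`w := ock_{q-2} ⋯ ock_1 ock_0 (concat(a))` (with `w = concat(a)` if `q ≤ 1`). If `q = 0`, or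
`a²` is nonempty and `q ∈ Des(w)`, then `f_1̄(a) = 0`; otherwise `concat(f_1̄(a)) = w`. -/
theorem rawIncrFbar_via_ock (n : ℕ) (hn : 2 ≤ n) (z : Equiv.Perm ℤ) (hz : z * z = 1)
    (a : Fin n → List PLetter) (ha : IncrP n z a) :
    let q := (a ⟨0, by omega⟩).length
    let w := (List.range (q - 1)).foldl (fun u j => ock j u) (concatT a)
    ((q = 0 ∨ ((a ⟨1, by omega⟩) ≠ [] ∧ q ∈ DesSet w)) → rawIncrFbar n a = none) ∧
    (¬(q = 0 ∨ ((a ⟨1, by omega⟩) ≠ [] ∧ q ∈ DesSet w)) →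
      ∃ b, rawIncrFbar n a = some b ∧ concatT b = w) := by
  obtain ⟨m, rfl⟩ : ∃ m, n = m + 2 := ⟨n - 2, by omega⟩
  intro q w
  exact main_aux m z a ha q w rfl rfl

end QPaper
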